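/- Let q, k, p, p* be real numbers with 1 < q < k < p < p*. Let c ∈ ℝ, β ≥ 0, A ≥ 0, let (a_n) and (b_n) be sequences of nonnegative real numbers, and let (ε_n) be a sequence of reals with ε_n → 0. Assume that for every n, (1/p − 1/p*)·a_n^p + (1/q − 1/p*)·b_n^q ≤ c + β·(a_n + b_n) + A·a_n^k + ε_n. Then the sequence (a_n + b_n) is bounded. -/

import Mathlib

open Filter

private lemma grow (p k α β A C : ℝ) (hα : 0 < α) (hp1 : 1 < p) (hkp : k < p) :
    ∃ T : ℝ, 1 ≤ T ∧ ∀ x, T ≤ x → C ≤ α * x ^ p - β * x - A * x ^ k := by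
  have hp0 : (0:ℝ) < p := by linarith
  have htp : Tendsto (fun x : ℝ => x ^ p) atTop atTop := tendsto_rpow_atTop hp0
  have h1 : Tendsto (fun x : ℝ => x ^ (1 - p)) atTop (nhds 0) := by
    have := tendsto_rpow_neg_atTop (y := p - 1) (by linarith)
    simpa [neg_sub] using this
  have h2 : Tendsto (fun x : ℝ => x ^ (k - p)) atTop (nhds 0) := by
    have := tendsto_rpow_neg_atTop (y := p - k) (by linarith)
    simpa [neg_sub] using this
  have hbr : Tendsto (fun x : ℝ => α - β * x ^ (1 - p) - A * x ^ (k - p)) atTop (nhds α) := by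
    have := ((h1.const_mul β).const_sub α).sub (h2.const_mul A)
    simpa using this
  have hmul : Tendsto (fun x : ℝ => x ^ p * (α - β * x ^ (1 - p) - A * x ^ (k - p)))
      atTop atTop := htp.atTop_mul_pos hα hbr
  have heq : ∀ᶠ x in atTop,
      x ^ p * (α - β * x ^ (1 - p) - A * x ^ (k - p)) = α * x ^ p - β * x - A * x ^ k := by
    filter_upwards [eventually_gt_atTop (0:ℝ)] with x hx
    have e1 : x ^ p * x ^ (1 - p) = x := by
      rw [← Real.rpow_add hx]; simp
    have e2 : x ^ p * x ^ (k - p) = x ^ k := by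
      rw [← Real.rpow_add hx]; ring_nf
    have : x ^ p * (α - β * x ^ (1 - p) - A * x ^ (k - p))
        = α * x ^ p - β * (x ^ p * x ^ (1 - p)) - A * (x ^ p * x ^ (k - p)) := by ring
    rw [this, e1, e2]
  have hmul' : Tendsto (fun x : ℝ => α * x ^ p - β * x - A * x ^ k) atTop atTop :=
    hmul.congr' heq
  obtain ⟨T, hT⟩ := eventually_atTop.mp (hmul'.eventually_ge_atTop C)
  exact ⟨max T 1, le_max_right _ _, fun x hx => hT x (le_trans (le_max_left _ _) hx)⟩

/-- Boundedness step in the Palais–Smale analysis (Lemma 2.1). -/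
theorem stmt_0 (q k p ps : ℝ) (hq : 1 < q) (hqk : q < k) (hkp : k < p) (hpps : p < ps)
    (c β A : ℝ) (hβ : 0 ≤ β) (hA : 0 ≤ A)
    (a b : ℕ → ℝ) (ha : ∀ n, 0 ≤ a n) (hb : ∀ n, 0 ≤ b n)
    (ε : ℕ → ℝ) (hε : Filter.Tendsto ε Filter.atTop (nhds 0))
    (h : ∀ n, (1 / p - 1 / ps) * a n ^ p + (1 / q - 1 / ps) * b n ^ q
        ≤ c + β * (a n + b n) + A * a n ^ k + ε n) :
    ∃ M : ℝ, ∀ n, a n + b n ≤ M := by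
  have hp0 : (0:ℝ) < p := by linarith
  have hq0 : (0:ℝ) < q := by linarith
  have hps0 : (0:ℝ) < ps := by linarith
  set α1 : ℝ := 1 / p - 1 / ps with hα1def
  set α2 : ℝ := 1 / q - 1 / ps with hα2def
  have hα1 : 0 < α1 := by
    have : 1 / ps < 1 / p := one_div_lt_one_div_of_lt hp0 hpps
    simp only [hα1def]; linarith
  have hα2 : 0 < α2 := by
    have : 1 / ps < 1 / q := one_div_lt_one_div_of_lt hq0 (by linarith)
    simp only [hα2def]; linarith
  -- bound ε above
  obtain ⟨E, hE⟩ := hε.bddAbove_range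
  have hEn : ∀ n, ε n ≤ E := fun n => hE ⟨n, rfl⟩
  -- lower-bound functions: f x = α1 x^p - β x - A x^k, g y = α2 y^q - β y
  obtain ⟨X0, hX01, hX0⟩ := grow p k α1 β A 0 hα1 (by linarith) hkp
  obtain ⟨Y0, hY01, hY0⟩ := grow q 0 α2 β 0 0 hα2 hq (by linarith)
  have hgLB : ∀ y, 0 ≤ y → -(β * Y0) ≤ α2 * y ^ q - β * y := by
    intro y hy
    rcases le_or_gt Y0 y with hcase | hcase
    · have := hY0 y hcase
      have hβY : 0 ≤ β * Y0 := mul_nonneg hβ (by linarith)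
      nlinarith [Real.rpow_nonneg hy 0]
    · have h1 : β * y ≤ β * Y0 := mul_le_mul_of_nonneg_left (le_of_lt hcase) hβ
      have h2 : 0 ≤ α2 * y ^ q := mul_nonneg (le_of_lt hα2) (Real.rpow_nonneg hy q)
      linarith
  have hfLB : ∀ x, 0 ≤ x → -(β * X0 + A * X0 ^ k) ≤ α1 * x ^ p - β * x - A * x ^ k := by
    intro x hx
    rcases le_or_gt X0 x with hcase | hcase
    · have := hX0 x hcase
      have : (0:ℝ) ≤ β * X0 + A * X0 ^ k := by
        have := Real.rpow_nonneg (le_trans zero_le_one hX01) k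
        positivity
      linarith [hX0 x hcase]
    · have h1 : β * x ≤ β * X0 := mul_le_mul_of_nonneg_left (le_of_lt hcase) hβ
      have h2 : x ^ k ≤ X0 ^ k := Real.rpow_le_rpow hx (le_of_lt hcase) (by linarith)
      have h3 : A * x ^ k ≤ A * X0 ^ k := mul_le_mul_of_nonneg_left h2 hA
      have h4 : 0 ≤ α1 * x ^ p := mul_nonneg (le_of_lt hα1) (Real.rpow_nonneg hx p)
      linarith
  -- combined bound: f(a n) + g(b n) ≤ c + E
  have hkey : ∀ n, (α1 * a n ^ p - β * a n - A * a n ^ k) + (α2 * b n ^ q - β * b n)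
      ≤ c + E := by
    intro n
    have := h n
    have := hEn n
    linarith
  -- individual upper bounds
  obtain ⟨X1, hX11, hX1⟩ := grow p k α1 β A (c + E + β * Y0 + 1) hα1 (by linarith) hkp
  obtain ⟨Y1, hY11, hY1⟩ := grow q 0 α2 β 0 (c + E + (β * X0 + A * X0 ^ k) + 1) hα2 hq
    (by linarith)
  refine ⟨X1 + Y1, fun n => ?_⟩
  have han : a n ≤ X1 := by
    by_contra hcon
    push_neg at hcon
    have h1 := hX1 (a n) (le_of_lt hcon)
    have h2 := hgLB (b n) (hb n)
    linarith [hkey n]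
  have hbn : b n ≤ Y1 := by
    by_contra hcon
    push_neg at hcon
    have h1 := hY1 (b n) (le_of_lt hcon)
    have h2 := hfLB (a n) (ha n)
    have h1' : c + E + (β * X0 + A * X0 ^ k) + 1 ≤ α2 * b n ^ q - β * b n := by
      nlinarith [Real.rpow_nonneg (le_trans (le_trans zero_le_one hY11) (le_of_lt hcon)) 0]
    linarith [hkey n]
  linarith
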